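/- Let a_1, …, a_ℓ ≥ 0 be nonnegative real numbers, let δ > 0, and let P = Σ_{i=1}^{ℓ} a_i. Then there exists a collection 𝒯 of subsets of {1, …, ℓ} such that: (i) for every j ∈ {1, …, ℓ}, the number of j-element sets in 𝒯 is at most C(j·⌈1/δ⌉, j); and (ii) for every S ⊆ {1, …, ℓ} there exists T ∈ 𝒯 with T ⊆ S and Σ_{i ∈ S \ T} a_i ≤ δ · P. -/

import Mathlib

open Finset

/-- Cardinality of the set of positions below `r` in `Fin n`. -/
private lemma card_filter_val_lt {n : ℕ} {r : ℕ} (h : r ≤ n) :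
    ((univ : Finset (Fin n)).filter fun p => p.val < r).card = r := by
  have he : ((univ : Finset (Fin n)).filter fun p => p.val < r) =
      (range r).attachFin (fun m hm => lt_of_lt_of_le (mem_range.mp hm) h) := by
    ext p
    simp [Finset.mem_attachFin]
  rw [he, Finset.card_attachFin, Finset.card_range]

/-- Abel-summation comparison: if `b` is antitone and nonnegative, and every prefix of
positions contains at least `c` times as many elements of `B` as of `C`, then the
sum of `b` over `B` is at least `c` times the sum over `C`. -/
private lemma abel_compare {n : ℕ} (b : Fin n → ℝ) (hb : Antitone b) (h0 : ∀ p, 0 ≤ b p)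
    (c : ℕ) (C B : Finset (Fin n))
    (h : ∀ r : ℕ, c * (C.filter fun p => p.val < r).card ≤ (B.filter fun p => p.val < r).card) :
    (c : ℝ) * ∑ p ∈ C, b p ≤ ∑ p ∈ B, b p := by
  classical
  set b' : ℕ → ℝ := fun r => if h : r < n then b ⟨r, h⟩ else 0 with hb'
  set d : ℕ → ℝ := fun r => b' r - b' (r + 1) with hd
  have hd0 : ∀ r, 0 ≤ d r := by
    intro r
    simp only [hd, hb', sub_nonneg]
    by_cases h1 : r < n
    · by_cases h2 : r + 1 < n
      · simp only [dif_pos h1, dif_pos h2]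
        exact hb (show (⟨r, h1⟩ : Fin n) ≤ ⟨r + 1, h2⟩ from by simp [Fin.le_def])
      · simp only [dif_pos h1, dif_neg h2]
        exact h0 _
    · have h2 : ¬ (r + 1 < n) := by omega
      simp [dif_neg h1, dif_neg h2]
  have hIco : ∀ p : Fin n, ∑ r ∈ Finset.Ico p.val n, d r = b p := by
    intro p
    rw [Finset.sum_Ico_eq_sub _ p.isLt.le]
    simp only [hd]
    rw [Finset.sum_range_sub' b', Finset.sum_range_sub' b']
    have h1 : b' n = 0 := by simp [hb']
    have h2 : b' p.val = b p := by simp [hb', p.isLt]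
    rw [h1, h2]
    ring
  have key : ∀ A : Finset (Fin n),
      ∑ p ∈ A, b p = ∑ r ∈ Finset.range n, d r * ((A.filter fun p => p.val ≤ r).card : ℝ) := by
    intro A
    have h1 : ∀ p ∈ A, b p = ∑ r ∈ Finset.range n, if p.val ≤ r then d r else 0 := by
      intro p _
      rw [← Finset.sum_filter]
      have he : (Finset.range n).filter (fun r => p.val ≤ r) = Finset.Ico p.val n := by
        ext x
        simp only [mem_filter, mem_range, mem_Ico]
        tauto
      rw [he, hIco]
    rw [Finset.sum_congr rfl h1, Finset.sum_comm]
    refine Finset.sum_congr rfl fun r _ => ?_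
    rw [← Finset.sum_filter, Finset.sum_const, nsmul_eq_mul, mul_comm]
  rw [key C, key B, Finset.mul_sum]
  refine Finset.sum_le_sum fun r _ => ?_
  have hcard := h (r + 1)
  simp only [Nat.lt_succ_iff] at hcard
  have hcast : (c : ℝ) * ((C.filter fun p => p.val ≤ r).card : ℝ)
      ≤ ((B.filter fun p => p.val ≤ r).card : ℝ) := by exact_mod_cast hcard
  calc (c : ℝ) * (d r * ((C.filter fun p => p.val ≤ r).card : ℝ))
      = d r * ((c : ℝ) * ((C.filter fun p => p.val ≤ r).card : ℝ)) := by ring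
    _ ≤ d r * ((B.filter fun p => p.val ≤ r).card : ℝ) :=
        mul_le_mul_of_nonneg_left hcast (hd0 r)

/-- For any set `S` of positions there is a cutoff `r` such that the tail of `S` beyond `r`
has small sum and `r` is at most `k` times the number of elements of `S` before `r`. -/
private lemma key_claim {n : ℕ} (b : Fin n → ℝ) (hb : Antitone b) (h0 : ∀ p, 0 ≤ b p)
    (δ : ℝ) (hδ : 0 < δ) (k : ℕ) (hk : 1 / δ ≤ (k : ℝ)) (S : Finset (Fin n)) :
    ∃ r : ℕ, (∑ p ∈ S.filter (fun p => r ≤ p.val), b p ≤ δ * ∑ p, b p) ∧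
      r ≤ k * (S.filter fun p => p.val < r).card := by
  classical
  set P : ℝ := ∑ p, b p with hP
  have hP0 : 0 ≤ P := Finset.sum_nonneg fun p _ => h0 p
  have hk1 : 1 ≤ k := by
    have h1 : (0 : ℝ) < (k : ℝ) := lt_of_lt_of_le (by positivity) hk
    exact_mod_cast Nat.one_le_iff_ne_zero.mpr (by exact_mod_cast h1.ne')
  by_contra hcon
  push_neg at hcon
  -- hcon : ∀ r, tail ≤ δP → k * card < r
  have hTn : S.filter (fun p => n ≤ p.val) = ∅ :=
    Finset.filter_false_of_mem (fun p _ => not_le.mpr p.isLt)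
  have hex : ∃ r : ℕ, ∑ p ∈ S.filter (fun p => r ≤ p.val), b p ≤ δ * P :=
    ⟨n, by rw [hTn]; simpa using mul_nonneg hδ.le hP0⟩
  set r₀ := Nat.find hex with hr₀def
  have hr0 : ∑ p ∈ S.filter (fun p => r₀ ≤ p.val), b p ≤ δ * P := Nat.find_spec hex
  have hr0n : r₀ ≤ n := Nat.find_le (by rw [hTn]; simpa using mul_nonneg hδ.le hP0)
  have hmono : ∀ {r r' : ℕ}, r ≤ r' →
      ∑ p ∈ S.filter (fun p => r' ≤ p.val), b p ≤ ∑ p ∈ S.filter (fun p => r ≤ p.val), b p := by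
    intro r r' hrr'
    apply Finset.sum_le_sum_of_subset_of_nonneg
    · exact Finset.monotone_filter_right _ (fun p _ hp => le_trans hrr' hp)
    · exact fun p _ _ => h0 p
  have hr0pos : 0 < r₀ := by
    rcases Nat.eq_zero_or_pos r₀ with h | h
    · exfalso
      have := hcon 0 (h ▸ hr0)
      omega
    · exact h
  set t := r₀ - 1 with htdef
  have ht : ¬ (∑ p ∈ S.filter (fun p => t ≤ p.val), b p ≤ δ * P) :=
    Nat.find_min hex (by omega)
  have htail : δ * P < ∑ p ∈ S.filter (fun p => t ≤ p.val), b p := not_le.mp ht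
  set C := S.filter (fun p => t ≤ p.val) with hCdef
  -- prefix counting hypothesis for abel_compare
  have hCB : ∀ r : ℕ, (k - 1) * (C.filter fun p => p.val < r).card
      ≤ ((Sᶜ).filter fun p => p.val < r).card := by
    intro r
    rcases le_or_gt r t with h1 | h2
    · have he : C.filter (fun p => p.val < r) = ∅ := by
        refine Finset.filter_false_of_mem fun p hp => ?_
        have := (Finset.mem_filter.mp hp).2
        omega
      simp [he]
    · have hfeq : ∀ X : Finset (Fin n),
          X.filter (fun p => p.val < r) = X.filter (fun p => p.val < min r n) := by
        intro X
        apply Finset.filter_congr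
        intro p _
        have := p.isLt
        constructor <;> intro <;> omega
      rw [hfeq C, hfeq (Sᶜ)]
      set r' := min r n with hr'def
      have hr0r' : r₀ ≤ r' := by omega
      have hTr' : ∑ p ∈ S.filter (fun p => r' ≤ p.val), b p ≤ δ * P :=
        le_trans (hmono hr0r') hr0
      have hkf : k * (S.filter fun p => p.val < r').card < r' := hcon r' hTr'
      have hu : ((univ : Finset (Fin n)).filter fun p => p.val < r').card = r' :=
        card_filter_val_lt (min_le_right r n)
      have hpart : (S.filter fun p => p.val < r').card
          + ((Sᶜ).filter fun p => p.val < r').card = r' := by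
        rw [← Finset.card_union_of_disjoint
          (Finset.disjoint_filter_filter disjoint_compl_right), ← Finset.filter_union,
          Finset.union_compl, hu]
      have hcf : (C.filter fun p => p.val < r').card ≤ (S.filter fun p => p.val < r').card :=
        Finset.card_le_card (Finset.filter_subset_filter _ (Finset.filter_subset _ _))
      set cc := (C.filter fun p => p.val < r').card
      set f := (S.filter fun p => p.val < r').card
      set bb := ((Sᶜ).filter fun p => p.val < r').card
      have e2 : (k - 1) * f + f = k * f := by
        have hkk : k = (k - 1) + 1 := by omega
        calc (k - 1) * f + f = ((k - 1) + 1) * f := by ring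
          _ = k * f := by rw [← hkk]
      have e3 : (k - 1) * cc + f ≤ (k - 1) * f + f :=
        Nat.add_le_add_right (Nat.mul_le_mul_left _ hcf) f
      have e4 : (k - 1) * cc + f < f + bb := by
        rw [e2] at e3
        exact lt_of_le_of_lt e3 (hpart ▸ hkf)
      omega
  have hA := abel_compare b hb h0 (k - 1) C (Sᶜ) hCB
  have hcast : ((k - 1 : ℕ) : ℝ) = (k : ℝ) - 1 := by
    push_cast [hk1]
    ring
  rw [hcast] at hA
  have hSC : ∑ p ∈ C, b p ≤ ∑ p ∈ S, b p :=
    Finset.sum_le_sum_of_subset_of_nonneg (Finset.filter_subset _ _) (fun p _ _ => h0 p)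
  have hsum : ∑ p ∈ S, b p + ∑ p ∈ Sᶜ, b p = P := Finset.sum_add_sum_compl S b
  have hkδ : (1 : ℝ) ≤ (k : ℝ) * δ := by
    rw [div_le_iff₀ hδ] at hk
    linarith
  have hkpos : (0 : ℝ) < (k : ℝ) := by exact_mod_cast hk1
  have c1 : (k : ℝ) * ∑ p ∈ C, b p ≤ P := by nlinarith [hA, hSC, hsum]
  have c2 : (k : ℝ) * (δ * P) < (k : ℝ) * ∑ p ∈ C, b p :=
    mul_lt_mul_of_pos_left htail hkpos
  have c3 : P ≤ (k : ℝ) * (δ * P) := by nlinarith [hkδ, hP0]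
  linarith

theorem statement_5 (ℓ : ℕ) (a : Fin ℓ → ℝ) (ha : ∀ i, 0 ≤ a i)
    (δ : ℝ) (hδ : 0 < δ) :
    ∃ 𝒯 : Finset (Finset (Fin ℓ)),
      (∀ j : ℕ, 1 ≤ j → j ≤ ℓ →
        (𝒯.filter (fun T => T.card = j)).card ≤ (j * ⌈1 / δ⌉₊).choose j) ∧
      (∀ S : Finset (Fin ℓ), ∃ T ∈ 𝒯, T ⊆ S ∧ ∑ i ∈ S \ T, a i ≤ δ * ∑ i, a i) := by
  classical
  set k := ⌈1 / δ⌉₊ with hkdef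
  set σ : Equiv.Perm (Fin ℓ) := Tuple.sort (fun i => -a i) with hσdef
  set b : Fin ℓ → ℝ := fun p => a (σ p) with hbdef
  have hb : Antitone b := by
    intro p q hpq
    have h1 := Tuple.monotone_sort (fun i => -a i) hpq
    simp only [Function.comp_apply] at h1
    simp only [hbdef]
    linarith
  have h0 : ∀ p, 0 ≤ b p := fun p => ha _
  have hPsum : ∑ p, b p = ∑ i, a i := Equiv.sum_comp σ a
  refine ⟨univ.filter (fun T => ∀ i ∈ T, (σ.symm i).val < k * T.card), ?_, ?_⟩
  · intro j hj1 hjl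
    have hsub : (univ.filter (fun T : Finset (Fin ℓ) => ∀ i ∈ T, (σ.symm i).val < k * T.card)).filter
          (fun T => T.card = j)
        ⊆ (univ.filter fun i : Fin ℓ => (σ.symm i).val < k * j).powersetCard j := by
      intro T hT
      simp only [Finset.mem_filter, Finset.mem_univ, true_and] at hT
      obtain ⟨hT1, hT2⟩ := hT
      rw [Finset.mem_powersetCard]
      refine ⟨fun i hi => ?_, hT2⟩
      simp only [Finset.mem_filter, Finset.mem_univ, true_and]
      have := hT1 i hi
      rwa [hT2] at this
    have hW : (univ.filter fun i : Fin ℓ => (σ.symm i).val < k * j).card ≤ k * j := by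
      have h5 : (univ.filter fun i : Fin ℓ => (σ.symm i).val < k * j).card
          ≤ (Finset.range (k * j)).card :=
        Finset.card_le_card_of_injOn (fun i => (σ.symm i).val)
          (fun i hi => Finset.mem_range.mpr (Finset.mem_filter.mp hi).2)
          (fun x _ y _ hxy => σ.symm.injective (Fin.val_injective hxy))
      simpa using h5
    calc ((univ.filter (fun T : Finset (Fin ℓ) => ∀ i ∈ T, (σ.symm i).val < k * T.card)).filter
          (fun T => T.card = j)).card
        ≤ ((univ.filter fun i : Fin ℓ => (σ.symm i).val < k * j).powersetCard j).card :=
          Finset.card_le_card hsub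
      _ = (univ.filter fun i : Fin ℓ => (σ.symm i).val < k * j).card.choose j :=
          Finset.card_powersetCard _ _
      _ ≤ (k * j).choose j := Nat.choose_le_choose j hW
      _ = (j * k).choose j := by rw [Nat.mul_comm]
  · intro S
    obtain ⟨r, hr1, hr2⟩ := key_claim b hb h0 δ hδ k (Nat.le_ceil _) (S.image σ.symm)
    refine ⟨((S.image σ.symm).filter fun p => p.val < r).image σ, ?_, ?_, ?_⟩
    · simp only [Finset.mem_filter, Finset.mem_univ, true_and]
      intro i hi
      rw [Finset.mem_image] at hi
      obtain ⟨p, hp, rfl⟩ := hi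
      rw [Finset.mem_filter] at hp
      rw [Equiv.symm_apply_apply,
        Finset.card_image_of_injective _ σ.injective]
      exact lt_of_lt_of_le hp.2 hr2
    · intro i hi
      simp only [Finset.mem_image, Finset.mem_filter] at hi
      obtain ⟨p, ⟨hpS, _⟩, rfl⟩ := hi
      obtain ⟨i', hi', rfl⟩ := hpS
      simpa using hi'
    · have hTS : ((S.image σ.symm).filter fun p => p.val < r).image σ ⊆ S := by
        intro i hi
        simp only [Finset.mem_image, Finset.mem_filter] at hi
        obtain ⟨p, ⟨hpS, _⟩, rfl⟩ := hi
        obtain ⟨i', hi', rfl⟩ := hpS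
        simpa using hi'
      have h1 : ∑ i ∈ S \ ((S.image σ.symm).filter fun p => p.val < r).image σ, a i
          + ∑ i ∈ ((S.image σ.symm).filter fun p => p.val < r).image σ, a i
          = ∑ i ∈ S, a i := Finset.sum_sdiff hTS
      have h2 : ∑ p ∈ (S.image σ.symm).filter (fun p => p.val < r), b p
          + ∑ p ∈ (S.image σ.symm).filter (fun p => ¬ p.val < r), b p
          = ∑ p ∈ S.image σ.symm, b p :=
        Finset.sum_filter_add_sum_filter_not _ _ _
      have h2' : ∑ p ∈ (S.image σ.symm).filter (fun p => ¬ p.val < r), b p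
          = ∑ p ∈ (S.image σ.symm).filter (fun p => r ≤ p.val), b p := by
        apply Finset.sum_congr _ (fun _ _ => rfl)
        apply Finset.filter_congr
        intro p _
        simp [not_lt]
      have h3 : ∑ i ∈ ((S.image σ.symm).filter fun p => p.val < r).image σ, a i
          = ∑ p ∈ (S.image σ.symm).filter (fun p => p.val < r), b p :=
        Finset.sum_image (fun p _ q _ h => σ.injective h)
      have h4 : ∑ p ∈ S.image σ.symm, b p = ∑ i ∈ S, a i := by
        rw [Finset.sum_image (fun p _ q _ h => σ.symm.injective h)]
        exact Finset.sum_congr rfl (fun i _ => by simp [hbdef])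
      rw [hPsum] at hr1
      linarith [hr1, h1, h2, h2', h3, h4]
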